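/- Let μ₀ > 0 and let φ be the even solution of φ'' = (1+V)φ, φ(0)=1, φ'(0)=0, with V(x) = μ₀(1+x²)^{-1/2}. Then there exists C > 0 such that 0 < φ(x) ≤ C (1+|x|)^{μ₀/2} e^{|x|} for all x ∈ ℝ. -/

import Mathlib

open Real


lemma key_ineq (a c x : ℝ) (ha : 0 < a) (hc : c = 5*(a+1)/2) (hx : 0 ≤ x) :
    1 + 2*a / Real.sqrt (1 + x^2) ≤
      1 + (2*a/(1+x) + (a^2 + 2*c - a)/(1+x)^2 + (2*a*c - 2*c)/(1+x)^3 + c^2/(1+x)^4) := by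
  have hs : (0:ℝ) < 1 + x := by linarith
  set r := Real.sqrt (1 + x^2) with hr
  have hr2 : r^2 = 1 + x^2 := Real.sq_sqrt (by positivity)
  have hrpos : 0 < r := Real.sqrt_pos.mpr (by positivity)
  have hrle : r ≤ 1 + x := by nlinarith
  have hrge : 1 + x ≤ 2 * r := by nlinarith [sq_nonneg (3*x-1), mul_pos hrpos hs, sq_nonneg (2*r - (1+x)), sq_nonneg (2*r + 1 + x)]
  have hrx : 1 + x - r ≤ 1 := by nlinarith
  have h1 : 2*a/r - 2*a/(1+x) ≤ 4*a/(1+x)^2 := by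
    rw [div_sub_div _ _ (ne_of_gt hrpos) (ne_of_gt hs), div_le_div_iff₀ (by positivity) (by positivity)]
    nlinarith [mul_le_mul_of_nonneg_left hrx (by positivity : (0:ℝ) ≤ 2*a*(1+x)^2),
      mul_le_mul_of_nonneg_left hrge (by positivity : (0:ℝ) ≤ 2*a*(1+x))]
  have hQ : 0 ≤ (a^2 + 2*c - 5*a)*(1+x)^2 + (2*a*c - 2*c)*(1+x) + c^2 := by
    subst hc
    nlinarith [sq_nonneg (a*(1+x)), sq_nonneg (a+1), hs, mul_pos hs hs, sq_nonneg a]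
  have h2 : 4*a/(1+x)^2 ≤ (a^2 + 2*c - a)/(1+x)^2 + (2*a*c - 2*c)/(1+x)^3 + c^2/(1+x)^4 := by
    have heq : (a^2 + 2*c - a)/(1+x)^2 + (2*a*c - 2*c)/(1+x)^3 + c^2/(1+x)^4 - 4*a/(1+x)^2
        = ((a^2 + 2*c - 5*a)*(1+x)^2 + (2*a*c - 2*c)*(1+x) + c^2)/(1+x)^4 := by
      field_simp
      ring
    have := div_nonneg hQ (le_of_lt (pow_pos hs 4))
    linarith [heq ▸ this]
  linarith


noncomputable def pf (a c : ℝ) : ℝ → ℝ := fun x => a * Real.log (1+x) + x + c - c/(1+x)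
noncomputable def p1f (a c : ℝ) : ℝ → ℝ := fun x => a/(1+x) + 1 + c/(1+x)^2
noncomputable def p2f (a c : ℝ) : ℝ → ℝ := fun x => -(a/(1+x)^2) - 2*c/(1+x)^3

lemma hasDerivAt_pf (a c x : ℝ) (hx : -1 < x) : HasDerivAt (pf a c) (p1f a c x) x := by
  have h1x : (1:ℝ) + x ≠ 0 := by linarith
  have hid : HasDerivAt (fun y : ℝ => 1 + y) 1 x := (hasDerivAt_id x).const_add 1
  have hlog : HasDerivAt (fun y : ℝ => Real.log (1+y)) (1/(1+x)) x := by
    simpa using hid.log h1x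
  have hinv : HasDerivAt (fun y : ℝ => c / (1+y)) (-(c/(1+x)^2)) x := by
    simp only [div_eq_mul_inv]
    refine ((hid.inv h1x).const_mul c).congr_deriv ?_
    field_simp
  have H := (((hlog.const_mul a).add (hasDerivAt_id x)).add_const c).sub hinv
  refine H.congr_deriv ?_
  unfold p1f
  field_simp
  ring

lemma hasDerivAt_p1f (a c x : ℝ) (hx : -1 < x) : HasDerivAt (p1f a c) (p2f a c x) x := by
  have h1x : (1:ℝ) + x ≠ 0 := by linarith
  have hid : HasDerivAt (fun y : ℝ => 1 + y) 1 x := (hasDerivAt_id x).const_add 1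
  have hinv : HasDerivAt (fun y : ℝ => a / (1+y)) (-(a/(1+x)^2)) x := by
    simp only [div_eq_mul_inv]
    refine ((hid.inv h1x).const_mul a).congr_deriv ?_
    field_simp
  have hsq : HasDerivAt (fun y : ℝ => (1+y)^2) (2*(1+x)) x := by
    simpa using hid.fun_pow 2
  have hinv2 : HasDerivAt (fun y : ℝ => c / (1+y)^2) (-(2*c/(1+x)^3)) x := by
    simp only [div_eq_mul_inv]
    refine ((hsq.inv (pow_ne_zero 2 h1x)).const_mul c).congr_deriv ?_
    field_simp
  have H := (hinv.add_const 1).add hinv2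
  refine H.congr_deriv ?_
  unfold p2f; ring



theorem stmt_12 (μ₀ : ℝ) (hμ₀ : 0 < μ₀) (V : ℝ → ℝ)
    (hV : ∀ x, V x = μ₀ / Real.sqrt (1 + x ^ 2))
    (φ : ℝ → ℝ) (hφ : ContDiff ℝ 2 φ)
    (hode : ∀ x, deriv (deriv φ) x = (1 + V x) * φ x)
    (h0 : φ 0 = 1) (h0' : deriv φ 0 = 0)
    (heven : ∀ x, φ (-x) = φ x) :
    ∃ C : ℝ, 0 < C ∧ ∀ x : ℝ,
      0 < φ x ∧ φ x ≤ C * (1 + |x|) ^ (μ₀ / 2) * Real.exp |x| := by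
  have hdφ : Differentiable ℝ φ := hφ.differentiable (by norm_num)
  have hd2 : Differentiable ℝ (deriv φ) :=
    (((contDiff_succ_iff_deriv (n := 1)).mp (by exact_mod_cast hφ)).2.2).differentiable (by norm_num)
  have hVnn : ∀ x, 0 ≤ V x := fun x => by
    rw [hV]; positivity
  -- Step 1: positivity of φ on [0, ∞)
  have hpos : ∀ x, 0 ≤ x → 0 < φ x := by
    by_contra hcon
    push_neg at hcon
    obtain ⟨z, hz0, hzneg⟩ := hcon
    set T : Set ℝ := Set.Ici 0 ∩ φ ⁻¹' Set.Iic 0 with hT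
    have hTc : IsClosed T := isClosed_Ici.inter (isClosed_Iic.preimage hφ.continuous)
    have hTne : T.Nonempty := ⟨z, hz0, hzneg⟩
    have hTbd : BddBelow T := ⟨0, fun y hy => hy.1⟩
    set x₀ := sInf T with hx₀
    have hx₀T : x₀ ∈ T := hTc.csInf_mem hTne hTbd
    have hx₀0 : 0 ≤ x₀ := hx₀T.1
    have hx₀pos : 0 < x₀ := by
      rcases lt_or_eq_of_le hx₀0 with h | h
      · exact h
      · exfalso; have := hx₀T.2; rw [← h] at this; simp [h0] at this
        linarith [this]
    have hlt : ∀ y, 0 ≤ y → y < x₀ → 0 < φ y := by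
      intro y hy hylt
      by_contra hyn
      push_neg at hyn
      exact absurd (csInf_le hTbd ⟨hy, hyn⟩) (not_le.mpr hylt)
    have hmono1 : MonotoneOn (deriv φ) (Set.Icc 0 x₀) := by
      apply monotoneOn_of_deriv_nonneg (convex_Icc 0 x₀) hd2.continuous.continuousOn
        (hd2.differentiableOn.mono interior_subset)
      intro y hy
      rw [interior_Icc] at hy
      rw [hode]
      have := hlt y hy.1.le hy.2
      have := hVnn y
      positivity
    have hder_nn : ∀ y ∈ Set.Icc 0 x₀, 0 ≤ deriv φ y := by
      intro y hy
      have := hmono1 ⟨le_refl 0, hx₀pos.le⟩ hy hy.1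
      rwa [h0'] at this
    have hmono2 : MonotoneOn φ (Set.Icc 0 x₀) := by
      apply monotoneOn_of_deriv_nonneg (convex_Icc 0 x₀) hdφ.continuous.continuousOn
        (hdφ.differentiableOn.mono interior_subset)
      intro y hy
      rw [interior_Icc] at hy
      exact hder_nn y ⟨hy.1.le, hy.2.le⟩
    have h1le : (1:ℝ) ≤ φ x₀ := by
      have := hmono2 ⟨le_refl 0, hx₀pos.le⟩ ⟨hx₀0, le_refl x₀⟩ hx₀0
      rwa [h0] at this
    have := hx₀T.2
    simp only [Set.mem_preimage, Set.mem_Iic] at this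
    linarith
  -- setup constants
  set a := μ₀ / 2 with ha_def
  have ha : 0 < a := by positivity
  set c := 5*(a+1)/2 with hc_def
  have hcpos : 0 < c := by positivity
  set w : ℝ → ℝ := fun x => Real.exp (pf a c x) with hw_def
  have hwpos : ∀ x, 0 < w x := fun x => Real.exp_pos _
  have hw0 : w 0 = 1 := by
    simp [hw_def, pf]
  have hdw : ∀ x, -1 < x → HasDerivAt w (p1f a c x * w x) x := by
    intro x hx
    have := (hasDerivAt_pf a c x hx).exp
    simpa [mul_comm] using this
  -- key inequality in terms of p1f, p2f
  have hkey : ∀ x, 0 ≤ x → 1 + V x ≤ (p1f a c x)^2 + p2f a c x := by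
    intro x hx
    have h1x : (0:ℝ) < 1 + x := by linarith
    have := key_ineq a c x ha hc_def hx
    have hVx : V x = 2*a / Real.sqrt (1 + x^2) := by rw [hV, ha_def]; ring_nf
    have hexp : (p1f a c x)^2 + p2f a c x
        = 1 + (2*a/(1+x) + (a^2 + 2*c - a)/(1+x)^2 + (2*a*c - 2*c)/(1+x)^3 + c^2/(1+x)^4) := by
      unfold p1f p2f
      field_simp
      ring
    rw [hVx, hexp]
    exact this
  -- u := w * (p1f * φ - φ')
  set u : ℝ → ℝ := fun x => w x * (p1f a c x * φ x - deriv φ x) with hu_def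
  have hdu : ∀ x, -1 < x → HasDerivAt u
      (p1f a c x * w x * (p1f a c x * φ x - deriv φ x)
        + w x * (p2f a c x * φ x + p1f a c x * deriv φ x - deriv (deriv φ) x)) x := by
    intro x hx
    exact (hdw x hx).mul (((hasDerivAt_p1f a c x hx).mul (hdφ x).hasDerivAt).sub (hd2 x).hasDerivAt)
  have hu_nonneg : ∀ x, 0 ≤ x → 0 ≤ u x := by
    have humono : MonotoneOn u (Set.Ici 0) := by
      apply monotoneOn_of_deriv_nonneg (convex_Ici 0)
      · intro x hx
        exact (hdu x (by simp at hx; linarith)).continuousAt.continuousWithinAt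
      · rw [interior_Ici]
        intro x hx
        exact (hdu x (by simp at hx; linarith)).differentiableAt.differentiableWithinAt
      · rw [interior_Ici]
        intro x hx
        have hx0 : (0:ℝ) < x := hx
        rw [(hdu x (by linarith)).deriv, hode]
        have hrw : p1f a c x * w x * (p1f a c x * φ x - deriv φ x)
            + w x * (p2f a c x * φ x + p1f a c x * deriv φ x - (1 + V x) * φ x)
            = w x * φ x * ((p1f a c x)^2 + p2f a c x - (1 + V x)) := by ring
        rw [hrw]
        have h3 : 0 ≤ (p1f a c x)^2 + p2f a c x - (1 + V x) := by
          linarith [hkey x hx0.le]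
        exact mul_nonneg (mul_nonneg (hwpos x).le (hpos x hx0.le).le) h3
    intro x hx
    have h0mem : (0:ℝ) ∈ Set.Ici (0:ℝ) := Set.self_mem_Ici
    have := humono h0mem (show x ∈ Set.Ici (0:ℝ) from hx) hx
    have hu0 : 0 ≤ u 0 := by
      simp only [hu_def, h0, h0', hw0]
      unfold p1f
      have : (0:ℝ) ≤ a/(1+0) + 1 + c/(1+0)^2 := by positivity
      simpa using this
    linarith
  -- g := φ / w is antitone on [0, ∞)
  have hdg : ∀ x, -1 < x → HasDerivAt (fun y => φ y / w y)
      ((deriv φ x * w x - φ x * (p1f a c x * w x)) / (w x)^2) x :=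
    fun x hx => (hdφ x).hasDerivAt.div (hdw x hx) (ne_of_gt (hwpos x))
  have hganti : AntitoneOn (fun y => φ y / w y) (Set.Ici 0) := by
    apply antitoneOn_of_deriv_nonpos (convex_Ici 0)
    · intro x hx
      exact (hdg x (by simp at hx; linarith)).continuousAt.continuousWithinAt
    · rw [interior_Ici]
      intro x hx
      exact (hdg x (by simp at hx; linarith)).differentiableAt.differentiableWithinAt
    · rw [interior_Ici]
      intro x hx
      have hx0 : (0:ℝ) < x := hx
      rw [(hdg x (by linarith)).deriv]
      apply div_nonpos_of_nonpos_of_nonneg _ (sq_nonneg _)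
      have := hu_nonneg x hx0.le
      simp only [hu_def] at this
      nlinarith
  have hcomp : ∀ x, 0 ≤ x → φ x ≤ w x := by
    intro x hx
    have h2 : φ x / w x ≤ φ 0 / w 0 := hganti (Set.self_mem_Ici) (show x ∈ Set.Ici (0:ℝ) from hx) hx
    rw [h0, hw0, div_one] at h2
    exact (div_le_one (hwpos x)).mp h2
  -- conclusion
  refine ⟨Real.exp c, Real.exp_pos c, fun x => ?_⟩
  have hax : φ x = φ |x| := by
    rcases abs_cases x with ⟨h, _⟩ | ⟨h, _⟩
    · rw [h]
    · rw [h, heven]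
  have habs : (0:ℝ) ≤ |x| := abs_nonneg x
  constructor
  · rw [hax]; exact hpos _ habs
  · rw [hax]
    calc φ |x| ≤ w |x| := hcomp _ habs
    _ ≤ Real.exp (a * Real.log (1 + |x|) + |x| + c) := by
        apply Real.exp_le_exp.mpr
        simp only [pf]
        have : 0 ≤ c / (1 + |x|) := by positivity
        linarith
    _ = Real.exp c * (1 + |x|) ^ a * Real.exp |x| := by
        rw [Real.rpow_def_of_pos (by positivity)]
        rw [← Real.exp_add, ← Real.exp_add]
        ring_nf
    _ = Real.exp c * (1 + |x|) ^ (μ₀/2) * Real.exp |x| := by rw [ha_def]
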